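/- arXiv:2509.20332 — 2 statements merged into one kernel-verified Lean document; each statement's English description precedes it below -/
import Mathlib

section
/- Let X, Y be disjoint sets of distinct reals with N = |X| + |Y| even, x ∈ X, X' = X \ {x}, and x* a real distinct from all values in X' ∪ Y, X* = {x*} ∪ X'. If |rank(x*, X*∪Y) - (N+1)/2| = |rank(x, X∪Y) - (N+1)/2| = 1/2, then T(X,Y) = T(X*,Y), where T is the Ansari-Bradley statistic. -/
open Finset

/-- rank of `x` in `Z`: number of elements of `Z` less than or equal to `x`. -/
noncomputable def rk (x : ℝ) (Z : Finset ℝ) : ℕ := (Z.filter (fun z => z ≤ x)).card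

/-- Ansari-Bradley test statistic. -/
noncomputable def ABT (A B : Finset ℝ) : ℝ :=
  ∑ a ∈ A, |(rk a (A ∪ B) : ℝ) - (((A ∪ B).card : ℝ) + 1) / 2|

lemma rk_insert (a t : ℝ) (Z : Finset ℝ) (ht : t ∉ Z) :
    rk a (insert t Z) = rk a Z + (if t ≤ a then 1 else 0) := by
  unfold rk
  rw [filter_insert]
  split_ifs with h
  · rw [card_insert_of_notMem (fun hm => ht (mem_filter.1 hm).1)]
  · omega

lemma rk_lt_rk (u v : ℝ) (Z : Finset ℝ) (hv : v ∈ Z) (h : u < v) : rk u Z < rk v Z := by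
  apply card_lt_card
  constructor
  · exact filter_subset_filter _ (le_refl Z) |>.trans (le_refl _) |>.trans
      (by exact fun z hz => mem_filter.2 ⟨(mem_filter.1 hz).1, le_trans (mem_filter.1 hz).2 h.le⟩)
  · intro hsub
    have : v ∈ Z.filter (fun z => z ≤ u) := hsub (mem_filter.2 ⟨hv, le_refl v⟩)
    exact absurd (mem_filter.1 this).2 (not_le.2 h)

theorem stmt5 (X Y : Finset ℝ) (x xs : ℝ) (hd : Disjoint X Y) (hx : x ∈ X)
    (X' Xs : Finset ℝ) (hX' : X' = X.erase x) (hxs : xs ∉ X' ∪ Y)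
    (hXs : Xs = insert xs X') (N : ℕ) (hN : N = X.card + Y.card)
    (hNeven : Even N)
    (habs1 : |(rk xs (Xs ∪ Y) : ℝ) - ((N : ℝ) + 1) / 2| = 1 / 2)
    (habs2 : |(rk x (X ∪ Y) : ℝ) - ((N : ℝ) + 1) / 2| = 1 / 2) :
    ABT X Y = ABT Xs Y := by
  obtain ⟨k, hk⟩ := hNeven
  have hxX' : x ∉ X' := by simp [hX']
  have hXeq : X = insert x X' := by rw [hX', insert_erase hx]
  have hxY : x ∉ Y := disjoint_left.1 hd hx
  have hxU : x ∉ X' ∪ Y := by simp [hX', hxY]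
  have hxsX' : xs ∉ X' := fun h => hxs (mem_union_left _ h)
  have hU1 : X ∪ Y = insert x (X' ∪ Y) := by rw [hXeq, insert_union]
  have hU2 : Xs ∪ Y = insert xs (X' ∪ Y) := by rw [hXs, insert_union]
  have hcard1 : (X ∪ Y).card = N := by rw [hN, card_union_of_disjoint hd]
  have hcard2 : (Xs ∪ Y).card = N := by
    rw [hU2, card_insert_of_notMem hxs, ← hcard1, hU1, card_insert_of_notMem hxU]
  -- extract that the pivotal ranks are k or k+1
  have hrx : rk x (X ∪ Y) = k ∨ rk x (X ∪ Y) = k + 1 := by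
    rcases (abs_eq (by norm_num : (0:ℝ) ≤ 1/2)).1 habs2 with h | h
    · right
      have : (rk x (X ∪ Y) : ℝ) = (k : ℝ) + 1 := by rw [hk] at h; push_cast at h ⊢; linarith
      exact_mod_cast this
    · left
      have : (rk x (X ∪ Y) : ℝ) = (k : ℝ) := by rw [hk] at h; push_cast at h ⊢; linarith
      exact_mod_cast this
  have hrxs : rk xs (Xs ∪ Y) = k ∨ rk xs (Xs ∪ Y) = k + 1 := by
    rcases (abs_eq (by norm_num : (0:ℝ) ≤ 1/2)).1 habs1 with h | h
    · right
      have : (rk xs (Xs ∪ Y) : ℝ) = (k : ℝ) + 1 := by rw [hk] at h; push_cast at h ⊢; linarith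
      exact_mod_cast this
    · left
      have : (rk xs (Xs ∪ Y) : ℝ) = (k : ℝ) := by rw [hk] at h; push_cast at h ⊢; linarith
      exact_mod_cast this
  -- key pointwise lemma
  have key : ∀ a ∈ X', |(rk a (X ∪ Y) : ℝ) - ((N : ℝ) + 1) / 2|
      = |(rk a (Xs ∪ Y) : ℝ) - ((N : ℝ) + 1) / 2| := by
    intro a ha
    have hax : a ≠ x := ne_of_mem_erase (hX' ▸ ha)
    have haxs : a ≠ xs := fun h => hxs (h ▸ mem_union_left _ ha)
    have haX : a ∈ X := mem_of_mem_erase (hX' ▸ ha)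
    have ea1 : rk a (X ∪ Y) = rk a (X' ∪ Y) + (if x ≤ a then 1 else 0) := by
      rw [hU1, rk_insert _ _ _ hxU]
    have ea2 : rk a (Xs ∪ Y) = rk a (X' ∪ Y) + (if xs ≤ a then 1 else 0) := by
      rw [hU2, rk_insert _ _ _ hxs]
    by_cases h1 : x ≤ a <;> by_cases h2 : xs ≤ a
    · rw [ea1, ea2, if_pos h1, if_pos h2]
    · -- x < a < xs : middle rank is forced to be k
      have hxa : x < a := lt_of_le_of_ne h1 (Ne.symm hax)
      have haxs' : a < xs := lt_of_not_ge h2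
      have e1 : rk x (X ∪ Y) < rk a (X ∪ Y) :=
        rk_lt_rk x a _ (mem_union_left _ haX) hxa
      have e2 : rk a (Xs ∪ Y) < rk xs (Xs ∪ Y) :=
        rk_lt_rk a xs _ (hXs ▸ mem_union_left _ (mem_insert_self xs X')) haxs'
      rw [ea1, ea2, if_pos h1, if_neg h2]
      rw [ea1, if_pos h1] at e1
      rw [ea2, if_neg h2] at e2
      have hr : rk a (X' ∪ Y) = k := by omega
      rw [hr, hk]
      push_cast
      rw [show ((k:ℝ) + 1) - ((k + k : ℝ) + 1) / 2 = 1/2 by ring,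
        show ((k:ℝ) + 0) - ((k + k : ℝ) + 1) / 2 = -(1/2) by ring]
      simp
    · -- xs < a < x
      have hxa : a < x := lt_of_not_ge h1
      have haxs' : xs < a := lt_of_le_of_ne h2 (Ne.symm haxs)
      have e1 : rk a (X ∪ Y) < rk x (X ∪ Y) :=
        rk_lt_rk a x _ (mem_union_left _ hx) hxa
      have e2 : rk xs (Xs ∪ Y) < rk a (Xs ∪ Y) :=
        rk_lt_rk xs a _ (hXs ▸ mem_union_left _ (mem_insert_of_mem ha)) haxs'
      rw [ea1, ea2, if_neg h1, if_pos h2]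
      rw [ea1, if_neg h1] at e1
      rw [ea2, if_pos h2] at e2
      have hr : rk a (X' ∪ Y) = k := by omega
      rw [hr, hk]
      push_cast
      rw [show ((k:ℝ) + 0) - ((k + k : ℝ) + 1) / 2 = -(1/2) by ring,
        show ((k:ℝ) + 1) - ((k + k : ℝ) + 1) / 2 = 1/2 by ring]
      simp
    · rw [ea1, ea2, if_neg h1, if_neg h2]
  -- assemble
  unfold ABT
  rw [hcard1, hcard2]
  conv_lhs => rw [hXeq, insert_union, ← hU1]
  conv_rhs => rw [hXs, insert_union, ← hU2]
  rw [sum_insert hxX', sum_insert hxsX', habs1, habs2]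
  congr 1
  exact sum_congr rfl key
end

section
/- Let X, Y be disjoint sets of distinct reals with |X| = n, |Y| = m, N = n + m, and X' ⊆ X a subset of size n' with N odd and n - n' even. Let X̂ be a set of n - n' distinct reals with X* = X̂ ∪ X', all values in X* ∪ Y distinct, whose ranks in X* ∪ Y are exactly the consecutive integers from (N+1)/2 - (n-n')/2 to (N+1)/2 + (n-n')/2 - 1. Then T(X*, Y) = T(X', Y) + (n² - n'²)/4, where T is the Ansari-Bradley statistic. -/
open Finset

lemma rk_filter_subset (x y : ℝ) (Z : Finset ℝ) (hxy : x ≤ y) :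
    Z.filter (fun z => z ≤ x) ⊆ Z.filter (fun z => z ≤ y) := by
  intro z hz
  rw [mem_filter] at hz ⊢
  exact ⟨hz.1, hz.2.trans hxy⟩

lemma rk_mono (x y : ℝ) (Z : Finset ℝ) (hxy : x ≤ y) : rk x Z ≤ rk y Z :=
  card_le_card (rk_filter_subset x y Z hxy)

lemma rk_lt (x y : ℝ) (Z : Finset ℝ) (hy : y ∈ Z) (hxy : x < y) : rk x Z < rk y Z := by
  apply card_lt_card
  refine ⟨rk_filter_subset x y Z hxy.le, ?_⟩
  intro hss
  have := hss (mem_filter.mpr ⟨hy, le_refl y⟩)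
  exact absurd (mem_filter.mp this).2 (not_le.mpr hxy)

lemma rk_inj {Z : Finset ℝ} {a b : ℝ} (ha : a ∈ Z) (hb : b ∈ Z)
    (h : rk a Z = rk b Z) : a = b := by
  rcases lt_trichotomy a b with h1 | h1 | h1
  · exact absurd h (rk_lt a b Z hb h1).ne
  · exact h1
  · exact absurd h.symm (rk_lt b a Z ha h1).ne

lemma rk_union_disjoint (a : ℝ) (A B : Finset ℝ) (hAB : Disjoint A B) :
    rk a (A ∪ B) = (A.filter (fun z => z ≤ a)).card + rk a B := by
  unfold rk
  rw [filter_union, card_union_of_disjoint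
    (hAB.mono (filter_subset _ _) (filter_subset _ _))]

lemma sum_abs_range (h : ℕ) : ∑ j ∈ Finset.range (2*h), |(j:ℝ) - h| = (h:ℝ)^2 := by
  induction h with
  | zero => simp
  | succ h ih =>
    have h2 : 2 * (h+1) = (2*h + 1) + 1 := by ring
    rw [h2, Finset.sum_range_succ, Finset.sum_range_succ']
    have e1 : (∑ j ∈ Finset.range (2*h), |((j+1:ℕ):ℝ) - ((h+1:ℕ):ℝ)|)
        = ∑ j ∈ Finset.range (2*h), |(j:ℝ) - (h:ℝ)| := by
      apply Finset.sum_congr rfl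
      intro j _
      congr 1
      push_cast
      ring
    push_cast
    push_cast at e1
    rw [e1, ih]
    have hh : (0:ℝ) ≤ h := by positivity
    rw [abs_of_nonpos (by linarith), abs_of_nonneg (by push_cast; linarith)]
    push_cast
    ring

theorem stmt13 (X Y Xp Xh Xs : Finset ℝ) (n m n' N : ℕ)
    (hd : Disjoint X Y) (hsub : Xp ⊆ X)
    (hn : X.card = n) (hm : Y.card = m) (hn' : Xp.card = n') (hN : N = n + m)
    (hodd : Odd N) (heven : Even (n - n')) (hle : n' ≤ n)
    (hXh : Xh.card = n - n') (hXs : Xs = Xh ∪ Xp)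
    (hdisj : Disjoint Xh (Xp ∪ Y))
    (hranks : Xh.image (fun z => rk z (Xs ∪ Y))
        = Finset.Icc ((N + 1) / 2 - (n - n') / 2) ((N + 1) / 2 + (n - n') / 2 - 1)) :
    ABT Xs Y = ABT Xp Y + ((n : ℝ) ^ 2 - (n' : ℝ) ^ 2) / 4 := by
  -- basic disjointness
  have hdXhXp : Disjoint Xh Xp := hdisj.mono_right subset_union_left
  have hdXhY : Disjoint Xh Y := hdisj.mono_right subset_union_right
  have hdXpY : Disjoint Xp Y := hd.mono_left hsub
  -- h and c
  obtain ⟨h, hh⟩ := heven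
  have hk : n - n' = 2 * h := by omega
  obtain ⟨t, ht⟩ := hodd
  obtain ⟨c, hcdef⟩ : ∃ c : ℕ, c = t + 1 := ⟨t + 1, rfl⟩
  have hc : (N + 1) / 2 = c := by omega
  have hNc : N + 1 = 2 * c := by omega
  have hhn : 2 * h ≤ n := by omega
  have hnN : n ≤ N := by omega
  have hhc : h < c := by omega
  -- set S
  have hSeq : Xs ∪ Y = Xh ∪ (Xp ∪ Y) := by rw [hXs, union_assoc]
  have hcardPY : (Xp ∪ Y).card = n' + m := by
    rw [card_union_of_disjoint hdXpY, hn', hm]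
  have hcardS : (Xs ∪ Y).card = N := by
    rw [hSeq, card_union_of_disjoint hdisj, hXh, hcardPY]
    omega
  -- ranks Icc rewritten
  have hranks' : Xh.image (fun z => rk z (Xs ∪ Y)) = Finset.Icc (c - h) (c + h - 1) := by
    rw [hranks, hk, hc]
    congr 1 <;> omega
  -- membership facts
  have hXhS : Xh ⊆ Xs ∪ Y := by rw [hSeq]; exact subset_union_left
  have hXpS : Xp ⊆ Xs ∪ Y := by
    intro a ha; rw [hSeq]; exact mem_union_right _ (mem_union_left _ ha)
  -- ranks of Xh elements
  have hrkXh : ∀ z ∈ Xh, c - h ≤ rk z (Xs ∪ Y) ∧ rk z (Xs ∪ Y) ≤ c + h - 1 := by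
    intro z hz
    have : rk z (Xs ∪ Y) ∈ Finset.Icc (c - h) (c + h - 1) := by
      rw [← hranks']
      exact mem_image.mpr ⟨z, hz, rfl⟩
    exact mem_Icc.mp this
  -- rank of a non-Xh element is outside the Icc
  have hrkout : ∀ a ∈ Xs ∪ Y, a ∉ Xh →
      rk a (Xs ∪ Y) ∉ Finset.Icc (c - h) (c + h - 1) := by
    intro a haS haXh hmem
    rw [← hranks'] at hmem
    obtain ⟨z, hz, hze⟩ := mem_image.mp hmem
    exact haXh (rk_inj (hXhS hz) haS hze ▸ hz)
  -- key per-element lemma for Xp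
  have key : ∀ a ∈ Xp,
      |((rk a (Xs ∪ Y)) : ℝ) - (((Xs ∪ Y).card : ℝ) + 1) / 2|
        = |((rk a (Xp ∪ Y)) : ℝ) - (((Xp ∪ Y).card : ℝ) + 1) / 2| + h := by
    intro a ha
    have haS : a ∈ Xs ∪ Y := hXpS ha
    have haXh : a ∉ Xh := fun hc' => (disjoint_left.mp hdXhXp) hc' ha
    have hsplit : rk a (Xs ∪ Y) = (Xh.filter (fun z => z ≤ a)).card + rk a (Xp ∪ Y) := by
      rw [hSeq]; exact rk_union_disjoint a Xh (Xp ∪ Y) hdisj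
    have hout := hrkout a haS haXh
    rw [mem_Icc, not_and_or, not_le, not_le] at hout
    -- cast helpers
    have hcS : (((Xs ∪ Y).card : ℝ) + 1) / 2 = (c : ℝ) := by
      rw [hcardS]
      have : (N : ℝ) + 1 = 2 * c := by exact_mod_cast congrArg (Nat.cast : ℕ → ℝ) hNc
      linarith
    have hcP : (((Xp ∪ Y).card : ℝ) + 1) / 2 = (c : ℝ) - h := by
      rw [hcardPY]
      have h1 : (n' : ℝ) + (m : ℝ) + 1 + 2 * h = 2 * c := by
        have : n' + m + 1 + 2 * h = 2 * c := by omega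
        exact_mod_cast congrArg (Nat.cast : ℕ → ℝ) this
      push_cast
      linarith
    rw [hcS, hcP]
    rcases hout with hlt | hgt
    · -- rank below the block: no Xh element ≤ a
      have hfe : Xh.filter (fun z => z ≤ a) = ∅ := by
        apply filter_eq_empty_iff.mpr
        intro z hz hza
        have h1 := (hrkXh z hz).1
        have h2 := rk_mono z a (Xs ∪ Y) hza
        omega
      have hre : rk a (Xs ∪ Y) = rk a (Xp ∪ Y) := by rw [hsplit, hfe]; simp
      rw [← hre]
      have hr1 : rk a (Xs ∪ Y) + h < c := by omega
      have hr2 : ((rk a (Xs ∪ Y)) : ℝ) + h < c := by exact_mod_cast hr1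
      rw [abs_of_nonpos (by linarith), abs_of_nonpos (by linarith)]
      ring
    · -- rank above the block: all of Xh ≤ a
      have hfe : Xh.filter (fun z => z ≤ a) = Xh := by
        apply filter_eq_self.mpr
        intro z hz
        by_contra hza
        have h1 := (hrkXh z hz).2
        have h2 := rk_lt a z (Xs ∪ Y) (hXhS hz) (not_le.mp hza)
        omega
      have hre : rk a (Xs ∪ Y) = 2 * h + rk a (Xp ∪ Y) := by
        rw [hsplit, hfe, hXh, hk]
      have hr1 : c + h ≤ rk a (Xs ∪ Y) := by omega
      have hr2 : (c : ℝ) + h ≤ ((rk a (Xs ∪ Y)) : ℝ) := by exact_mod_cast hr1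
      have hre' : ((rk a (Xs ∪ Y)) : ℝ) = 2 * h + ((rk a (Xp ∪ Y)) : ℝ) := by
        exact_mod_cast congrArg (Nat.cast : ℕ → ℝ) hre
      rw [abs_of_nonneg (by linarith), abs_of_nonneg (by linarith)]
      linarith
  -- sum over Xh
  have hXhsum : ∑ z ∈ Xh, |((rk z (Xs ∪ Y)) : ℝ) - (((Xs ∪ Y).card : ℝ) + 1) / 2|
      = (h : ℝ)^2 := by
    have hcS : (((Xs ∪ Y).card : ℝ) + 1) / 2 = (c : ℝ) := by
      rw [hcardS]
      have : (N : ℝ) + 1 = 2 * c := by exact_mod_cast congrArg (Nat.cast : ℕ → ℝ) hNc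
      linarith
    rw [hcS]
    have hinj : ∀ z₁ ∈ Xh, ∀ z₂ ∈ Xh, rk z₁ (Xs ∪ Y) = rk z₂ (Xs ∪ Y) → z₁ = z₂ :=
      fun z₁ h₁ z₂ h₂ he => rk_inj (hXhS h₁) (hXhS h₂) he
    have himg : ∑ i ∈ Finset.Icc (c - h) (c + h - 1), |(i : ℝ) - (c : ℝ)| = (h : ℝ)^2 := by
      rw [← Finset.Ico_add_one_right_eq_Icc, Finset.sum_Ico_eq_sum_range]
      have hlen : (c + h - 1 + 1) - (c - h) = 2 * h := by omega
      rw [hlen, ← sum_abs_range h]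
      apply Finset.sum_congr rfl
      intro j _
      congr 1
      have hcast : ((c - h + j : ℕ) : ℝ) = (c : ℝ) - h + j := by
        have hj : c - h + j + h = c + j := by omega
        have := congrArg (Nat.cast : ℕ → ℝ) hj
        push_cast at this ⊢
        linarith
      rw [hcast]
      ring
    calc ∑ z ∈ Xh, |((rk z (Xs ∪ Y)) : ℝ) - (c : ℝ)|
        = ∑ i ∈ Xh.image (fun z => rk z (Xs ∪ Y)), |(i : ℝ) - (c : ℝ)| :=
          (Finset.sum_image (f := fun i : ℕ => |(i : ℝ) - (c : ℝ)|) hinj).symm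
      _ = (h : ℝ)^2 := by rw [hranks']; exact himg
  -- put it together
  have hsplitsum : ABT Xs Y
      = (∑ z ∈ Xh, |((rk z (Xs ∪ Y)) : ℝ) - (((Xs ∪ Y).card : ℝ) + 1) / 2|)
        + ∑ a ∈ Xp, |((rk a (Xs ∪ Y)) : ℝ) - (((Xs ∪ Y).card : ℝ) + 1) / 2| := by
    unfold ABT
    rw [hXs, Finset.sum_union hdXhXp]
  rw [hsplitsum, hXhsum]
  have hXpsum : ∑ a ∈ Xp, |((rk a (Xs ∪ Y)) : ℝ) - (((Xs ∪ Y).card : ℝ) + 1) / 2|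
      = ABT Xp Y + n' * h := by
    unfold ABT
    rw [Finset.sum_congr rfl key, Finset.sum_add_distrib]
    simp [hn', mul_comm]
  rw [hXpsum]
  have hnr : (n : ℝ) = (n' : ℝ) + 2 * h := by
    have : n = n' + 2 * h := by omega
    exact_mod_cast congrArg (Nat.cast : ℕ → ℝ) this
  rw [hnr]
  ring
end
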